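/- Let X be a real-valued random variable on a probability space such that 0 ≤ X ≤ K/e almost surely, where K > 0 is a real constant and e is Euler's number, and let μ = E[X]. Then Var(X) ≤ K·μ, and consequently for every real p > 0 one has Var(X) / (p · max(1, μ))² ≤ K / p². (Applied with K = R·C to the Monte Carlo variate of the expected mutual information, this is the estimate proving Theorem 1: the expected number of samples required by the FastAMI algorithm with precision p on clusterings with R and C clusters and N ≥ 3 data points is asymptotically bounded by O(RC/p²).) -/

import Mathlib

open MeasureTheory ProbabilityTheory

/-- If `0 ≤ X ≤ K / e` almost surely with `K > 0` and `μ = E[X]`, then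
`Var X ≤ K * μ`, and consequently `Var X / (p * max 1 μ)^2 ≤ K / p^2` for every `p > 0`. -/
theorem fastami_sample_bound {Ω : Type*} [MeasureSpace Ω]
    [IsProbabilityMeasure (ℙ : Measure Ω)]
    (X : Ω → ℝ) (hXint : Integrable X ℙ) (hX2 : MemLp X 2 ℙ)
    (K : ℝ) (hK : 0 < K)
    (hbound : ∀ᵐ ω ∂ℙ, 0 ≤ X ω ∧ X ω ≤ K / Real.exp 1)
    (μ : ℝ) (hμ : μ = ∫ ω, X ω ∂ℙ) :
    variance X ℙ ≤ K * μ ∧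
      ∀ p : ℝ, 0 < p → variance X ℙ / (p * max 1 μ) ^ 2 ≤ K / p ^ 2 := by
  have hμ0 : 0 ≤ μ := by
    rw [hμ]
    exact integral_nonneg_of_ae (hbound.mono fun ω h => h.1)
  have hsq : Integrable (fun ω => X ω ^ 2) ℙ := hX2.integrable_sq
  have hint2 : Integrable (fun ω => K / Real.exp 1 * X ω) ℙ := hXint.const_mul _
  have hmono : ∫ ω, X ω ^ 2 ∂ℙ ≤ ∫ ω, K / Real.exp 1 * X ω ∂ℙ := by
    refine integral_mono_ae hsq hint2 (hbound.mono fun ω h => ?_)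
    have := mul_le_mul_of_nonneg_right h.2 h.1
    simpa [sq] using this
  have hKe : K / Real.exp 1 ≤ K := by
    rw [div_le_iff₀ (Real.exp_pos 1)]
    nlinarith [Real.exp_one_gt_d9, hK.le]
  have h1 : variance X ℙ ≤ K * μ := by
    rw [variance_eq_sub hX2, ← hμ]
    simp only [Pi.pow_apply]
    have : ∫ ω, K / Real.exp 1 * X ω ∂ℙ = K / Real.exp 1 * μ := by
      rw [integral_const_mul, hμ]
    nlinarith [sq_nonneg μ, mul_le_mul_of_nonneg_right hKe hμ0, hmono, this]
  refine ⟨h1, fun p hp => ?_⟩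
  have hm1 : (1 : ℝ) ≤ max 1 μ := le_max_left _ _
  have hμm : μ ≤ max 1 μ := le_max_right _ _
  have hm0 : (0 : ℝ) < max 1 μ := lt_of_lt_of_le one_pos hm1
  have hle : variance X ℙ ≤ K * (max 1 μ) ^ 2 := by
    calc variance X ℙ ≤ K * μ := h1
      _ ≤ K * max 1 μ := by nlinarith
      _ ≤ K * (max 1 μ) ^ 2 := by nlinarith [mul_nonneg (mul_nonneg hK.le hm0.le) (sub_nonneg.2 hm1)]
  rw [mul_pow, div_le_div_iff₀ (by positivity) (by positivity)]
  calc variance X ℙ * p ^ 2 ≤ K * (max 1 μ) ^ 2 * p ^ 2 := by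
        have := sq_nonneg p; nlinarith
    _ = K * (p ^ 2 * (max 1 μ) ^ 2) := by ring
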